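/- Let T ∈ B_A(H) admit an A-adjoint T^{♯} and let q be a complex number with |q| ≤ 1. Then w_{q,A}(T)² ≤ ((2 − |q|² + 4|q|√(1−|q|²))/2)·‖TT^{♯} + T^{♯}T‖_A. -/

import Mathlib

open scoped InnerProductSpace

variable {H : Type*} [NormedAddCommGroup H] [InnerProductSpace ℂ H] [CompleteSpace H]

/-- The semi-inner product induced by `A`: `⟨x,y⟩_A = ⟨Ax,y⟩`
(linear in the first argument, as in the paper). -/
noncomputable def sip (A : H →L[ℂ] H) (x y : H) : ℂ := @inner ℂ H _ y (A x)

/-- The seminorm induced by `A`. -/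
noncomputable def normA (A : H →L[ℂ] H) (x : H) : ℝ := Real.sqrt (sip A x x).re

/-- The `A`-`q`-numerical radius of `T`. -/
noncomputable def wqA (A T : H →L[ℂ] H) (q : ℂ) : ℝ :=
  sSup {r : ℝ | ∃ x y : H, normA A x = 1 ∧ normA A y = 1 ∧ sip A x y = q ∧
    r = ‖sip A (T x) y‖}

/-- The `A`-operator seminorm of `T`. -/
noncomputable def opNormA (A T : H →L[ℂ] H) : ℝ :=
  sSup {r : ℝ | ∃ x ∈ closure (Set.range fun v => A v), x ≠ 0 ∧ r = normA A (T x) / normA A x}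

open scoped ComplexConjugate

namespace Stmt4Aux
set_option linter.unusedSectionVars false

variable {A : H →L[ℂ] H}

lemma hsym (hA : A.IsPositive) (x y : H) : ⟪A x, y⟫_ℂ = ⟪x, A y⟫_ℂ := by
  have := hA.1 x y
  simpa using this

lemma sip_re_nonneg (hA : A.IsPositive) (x : H) : 0 ≤ (sip A x x).re := by
  have h := hA.2 x
  rw [ContinuousLinearMap.reApplyInnerSelf] at h
  have e : sip A x x = conj (⟪A x, x⟫_ℂ) := (inner_conj_symm _ _).symm
  rw [e, Complex.conj_re]
  simpa using h

lemma normA_nonneg (A : H →L[ℂ] H) (x : H) : 0 ≤ normA A x := Real.sqrt_nonneg _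

lemma normA_sq (hA : A.IsPositive) (x : H) : normA A x ^ 2 = (sip A x x).re := by
  rw [normA, Real.sq_sqrt (sip_re_nonneg hA x)]

lemma sip_conj (hA : A.IsPositive) (x y : H) : conj (sip A x y) = sip A y x := by
  rw [sip, sip, inner_conj_symm, hsym hA]

noncomputable def coreA (A : H →L[ℂ] H) (hA : A.IsPositive) :
    PreInnerProductSpace.Core ℂ H where
  inner x y := ⟪x, A y⟫_ℂ
  conj_inner_symm x y := show conj ⟪y, A x⟫_ℂ = ⟪x, A y⟫_ℂ by
    rw [inner_conj_symm, hsym hA]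
  re_inner_nonneg x := by
    have := sip_re_nonneg hA x
    rw [sip] at this
    simpa using this
  add_left x y z := show ⟪x + y, A z⟫_ℂ = ⟪x, A z⟫_ℂ + ⟪y, A z⟫_ℂ by
    rw [inner_add_left]
  smul_left x y r := show ⟪r • x, A y⟫_ℂ = conj r * ⟪x, A y⟫_ℂ by
    rw [inner_smul_left]

/-- Cauchy–Schwarz for the `A`-semi-inner product. -/
lemma abs_sip_le (hA : A.IsPositive) (u v : H) :
    ‖sip A u v‖ ≤ normA A u * normA A v := by
  have h := @InnerProductSpace.Core.inner_mul_inner_self_le ℂ H _ _ _ (coreA A hA) v u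
  have e1 : @inner ℂ H (coreA A hA).toInner v u = sip A u v := rfl
  have e2 : @inner ℂ H (coreA A hA).toInner u v = sip A v u := rfl
  have e3 : @inner ℂ H (coreA A hA).toInner v v = sip A v v := rfl
  have e4 : @inner ℂ H (coreA A hA).toInner u u = sip A u u := rfl
  rw [e1, e2, e3, e4] at h
  have habs : ‖sip A v u‖ = ‖sip A u v‖ := by
    rw [← sip_conj hA u v]
    exact RCLike.norm_conj _
  rw [habs] at h
  simp only [RCLike.re_to_complex] at h
  have hnorm : ‖sip A u v‖ = ‖sip A u v‖ := rfl
  have h2 : ‖sip A u v‖ ^ 2 ≤ (normA A u * normA A v) ^ 2 := by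
    rw [mul_pow, normA_sq hA, normA_sq hA, hnorm]
    nlinarith [h]
  nlinarith [h2, norm_nonneg (sip A u v),
    mul_nonneg (normA_nonneg A u) (normA_nonneg A v)]

end Stmt4Aux

namespace Stmt4Aux

lemma normA_le_sqrt (A : H →L[ℂ] H) (u : H) :
    normA A u ≤ Real.sqrt ‖A‖ * ‖u‖ := by
  have h1 : (sip A u u).re ≤ ‖A‖ * ‖u‖ ^ 2 := by
    calc (sip A u u).re ≤ ‖sip A u u‖ := Complex.re_le_norm _
      _ = ‖(⟪u, A u⟫_ℂ)‖ := by rw [sip]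
      _ ≤ ‖u‖ * ‖A u‖ := norm_inner_le_norm _ _
      _ ≤ ‖u‖ * (‖A‖ * ‖u‖) := by
          gcongr; exact A.le_opNorm u
      _ = ‖A‖ * ‖u‖ ^ 2 := by ring
  calc normA A u = Real.sqrt (sip A u u).re := rfl
    _ ≤ Real.sqrt (‖A‖ * ‖u‖ ^ 2) := Real.sqrt_le_sqrt h1
    _ = Real.sqrt ‖A‖ * ‖u‖ := by
        rw [Real.sqrt_mul (norm_nonneg A), Real.sqrt_sq (norm_nonneg u)]

lemma normA_map_le {A W : H →L[ℂ] H} (hA : A.IsPositive)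
    (hW : A ∘L W = (ContinuousLinearMap.adjoint W) ∘L A) (v : H) :
    normA A (W v) ≤ ‖W‖ * normA A v := by
  classical
  set m := normA A v with hm
  -- powers commute through A
  have hpow : ∀ (j : ℕ) (x : H), A ((W ^ j) x) = ((ContinuousLinearMap.adjoint W) ^ j) (A x) := by
    intro j
    induction j with
    | zero => intro x; simp
    | succ n ih =>
        intro x
        have e1 : (W ^ (n + 1)) x = (W ^ n) (W x) := by
          rw [pow_succ]; rfl
        rw [e1, ih (W x)]
        have e2 : A (W x) = (ContinuousLinearMap.adjoint W) (A x) := by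
          have := congrArg (fun (B : H →L[ℂ] H) => B x) hW
          simpa using this
        rw [e2]
        have : ((ContinuousLinearMap.adjoint W) ^ (n+1)) (A x)
            = ((ContinuousLinearMap.adjoint W) ^ n) ((ContinuousLinearMap.adjoint W) (A x)) := by
          rw [pow_succ]; rfl
        rw [this]
  have key : ∀ j : ℕ, normA A ((W ^ j) v) ^ 2 ≤ m * normA A ((W ^ (2 * j)) v) := by
    intro j
    have e : sip A ((W ^ j) v) ((W ^ j) v) = sip A v ((W ^ (2 * j)) v) := by
      rw [sip, sip, hpow j v]
      have hadj : (ContinuousLinearMap.adjoint W) ^ j = ContinuousLinearMap.adjoint (W ^ j) := by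
        rw [← ContinuousLinearMap.star_eq_adjoint, ← ContinuousLinearMap.star_eq_adjoint,
          ← star_pow]
      rw [hadj, ContinuousLinearMap.adjoint_inner_right]
      have : (W ^ j) ((W ^ j) v) = (W ^ (2 * j)) v := by
        rw [two_mul, pow_add]; rfl
      rw [this]
    rw [normA_sq hA, e]
    calc (sip A v ((W ^ (2*j)) v)).re ≤ ‖sip A v ((W ^ (2*j)) v)‖ :=
          Complex.re_le_norm _
      _ ≤ normA A v * normA A ((W ^ (2*j)) v) := abs_sip_le hA _ _
  -- iterate
  set c : ℕ → ℝ := fun n => normA A ((W ^ (2 ^ n)) v) with hc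
  have hkey2 : ∀ n : ℕ, c n ^ 2 ≤ m * c (n + 1) := by
    intro n
    have := key (2 ^ n)
    have e : 2 * 2 ^ n = 2 ^ (n + 1) := by rw [pow_succ]; ring
    rw [e] at this
    exact this
  have hm0 : 0 ≤ m := normA_nonneg A v
  have hc0 : ∀ n, 0 ≤ c n := fun n => normA_nonneg A _
  have ind : ∀ n : ℕ, c 0 ^ (2 ^ n) ≤ m ^ (2 ^ n - 1) * c n := by
    intro n
    induction n with
    | zero => simp
    | succ n ih =>
        have h1 : (1:ℕ) ≤ 2 ^ n := Nat.one_le_two_pow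
        have e1 : c 0 ^ (2 ^ (n+1)) = (c 0 ^ (2 ^ n)) ^ 2 := by
          rw [← pow_mul, pow_succ]
        have e2 : (2:ℕ) ^ (n+1) - 2 + 1 = 2 ^ (n+1) - 1 := by
          have : (2:ℕ) ≤ 2 ^ (n+1) := by
            calc (2:ℕ) = 2^1 := rfl
              _ ≤ 2 ^ (n+1) := Nat.pow_le_pow_right (by norm_num) (by omega)
          omega
        calc c 0 ^ (2 ^ (n+1)) = (c 0 ^ (2 ^ n)) ^ 2 := e1
          _ ≤ (m ^ (2 ^ n - 1) * c n) ^ 2 := by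
              apply pow_le_pow_left₀ (pow_nonneg (normA_nonneg A _) _) ih
          _ = m ^ (2 * (2 ^ n - 1)) * (c n ^ 2) := by rw [mul_pow, ← pow_mul]; ring
          _ ≤ m ^ (2 * (2 ^ n - 1)) * (m * c (n+1)) := by
              apply mul_le_mul_of_nonneg_left (hkey2 n) (pow_nonneg hm0 _)
          _ = m ^ (2 * (2 ^ n - 1) + 1) * c (n+1) := by rw [pow_succ]; ring
          _ = m ^ (2 ^ (n+1) - 1) * c (n+1) := by
              congr 2
              have : 2 * (2 ^ n - 1) = 2 ^ (n+1) - 2 := by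
                have : (1:ℕ) ≤ 2 ^ n := Nat.one_le_two_pow
                rw [pow_succ]; omega
              omega
  have cbound : ∀ n : ℕ, c n ≤ Real.sqrt ‖A‖ * ‖v‖ * ‖W‖ ^ (2 ^ n) := by
    intro n
    calc c n ≤ Real.sqrt ‖A‖ * ‖(W ^ (2 ^ n)) v‖ := normA_le_sqrt A _
      _ ≤ Real.sqrt ‖A‖ * (‖W ^ (2 ^ n)‖ * ‖v‖) :=
          mul_le_mul_of_nonneg_left ((W ^ (2 ^ n)).le_opNorm v) (Real.sqrt_nonneg _)
      _ ≤ Real.sqrt ‖A‖ * (‖W‖ ^ (2 ^ n) * ‖v‖) :=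
          mul_le_mul_of_nonneg_left
            (mul_le_mul_of_nonneg_right
              (norm_pow_le' W (Nat.pos_of_ne_zero (by positivity))) (norm_nonneg v))
            (Real.sqrt_nonneg _)
      _ = Real.sqrt ‖A‖ * ‖v‖ * ‖W‖ ^ (2 ^ n) := by ring
  -- conclusion
  have hc0v : c 0 = normA A (W v) := by simp [hc]
  rw [← hc0v]
  rcases eq_or_lt_of_le hm0 with hm0' | hmpos
  · -- m = 0
    have h1 := hkey2 0
    rw [← hm0'] at h1
    simp only [zero_mul] at h1
    have : c 0 = 0 := by nlinarith [hc0 0]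
    rw [this]
    exact mul_nonneg (norm_nonneg W) hm0
  · by_contra hcon
    push_neg at hcon
    have hW0 : 0 < ‖W‖ := by
      rcases (norm_nonneg W).eq_or_lt with h | h
      · exfalso
        have hW' : W = 0 := norm_eq_zero.mp h.symm
        have hcz : c 0 = 0 := by
          have e : c 0 = normA A ((W ^ (2:ℕ) ^ (0:ℕ)) v) := rfl
          rw [e, hW']
          norm_num [normA, sip]
        rw [hcz] at hcon
        nlinarith [mul_nonneg (norm_nonneg W) hm0]
      · exact h
    set r : ℝ := c 0 / (‖W‖ * m) with hr
    have hden : 0 < ‖W‖ * m := mul_pos hW0 hmpos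
    have hr1 : 1 < r := by
      rw [hr, lt_div_iff₀ hden]
      simpa [mul_comm] using hcon
    have hrn : ∀ n : ℕ, r ^ (2 ^ n) ≤ Real.sqrt ‖A‖ * ‖v‖ / m := by
      intro n
      have h1 : c 0 ^ (2 ^ n) ≤ m ^ (2 ^ n - 1) * (Real.sqrt ‖A‖ * ‖v‖ * ‖W‖ ^ (2 ^ n)) :=
        (ind n).trans (mul_le_mul_of_nonneg_left (cbound n) (pow_nonneg hm0 _))
      rw [hr, div_pow, div_le_div_iff₀ (by positivity) hmpos]
      calc c 0 ^ 2 ^ n * m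
          ≤ (m ^ (2 ^ n - 1) * (Real.sqrt ‖A‖ * ‖v‖ * ‖W‖ ^ (2 ^ n))) * m := by
            nlinarith [h1, hmpos]
        _ = Real.sqrt ‖A‖ * ‖v‖ * (‖W‖ ^ (2^n) * (m ^ (2^n - 1) * m)) := by ring
        _ = Real.sqrt ‖A‖ * ‖v‖ * (‖W‖ * m) ^ 2 ^ n := by
            rw [← pow_succ]
            have e : 2 ^ n - 1 + 1 = 2 ^ n := by
              have : (1:ℕ) ≤ 2 ^ n := Nat.one_le_two_pow
              omega
            rw [e, mul_pow]
    have hub : ∀ n : ℕ, r ^ n ≤ Real.sqrt ‖A‖ * ‖v‖ / m := by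
      intro n
      calc r ^ n ≤ r ^ (2 ^ n) := by
            apply pow_le_pow_right₀ (le_of_lt hr1) (Nat.le_of_lt (Nat.lt_two_pow_self (n := n)))
        _ ≤ _ := hrn n
    obtain ⟨n, hn⟩ := pow_unbounded_of_one_lt (Real.sqrt ‖A‖ * ‖v‖ / m) hr1
    exact absurd (hub n) (not_le.mpr hn)

lemma sip_self_eq_one {A : H →L[ℂ] H} (hA : A.IsPositive) {y : H} (h : normA A y = 1) :
    sip A y y = 1 := by
  have hre : (sip A y y).re = 1 := by
    have := congrArg (fun r => r ^ 2) h
    simpa [normA_sq hA] using this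
  have him : (sip A y y).im = 0 := by
    have hc := sip_conj hA y y
    have := congrArg Complex.im hc
    simp only [Complex.conj_im] at this
    linarith
  exact Complex.ext (by simp [hre]) (by simp [him])

lemma normA_zero (A : H →L[ℂ] H) : normA A (0 : H) = 0 := by
  simp [normA, sip]

end Stmt4Aux

open Stmt4Aux

set_option maxHeartbeats 1000000

theorem stmt4 (A T S : H →L[ℂ] H) (hA : A.IsPositive)
    (hrank : 2 ≤ Module.rank ℂ (LinearMap.range (A : H →ₗ[ℂ] H)))
    (hS : A ∘L S = (ContinuousLinearMap.adjoint T) ∘L A)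
    (q : ℂ) (hq : ‖q‖ ≤ 1) :
    (wqA A T q) ^ 2 ≤
      (2 - ‖q‖ ^ 2 + 4 * ‖q‖ * Real.sqrt (1 - ‖q‖ ^ 2)) / 2 *
        opNormA A (T ∘L S + S ∘L T) := by
  classical
  set t := ‖q‖ with ht
  have ht0 : 0 ≤ t := norm_nonneg q
  have ht1 : (0:ℝ) ≤ 1 - t ^ 2 := by nlinarith
  set R := T ∘L S + S ∘L T with hR
  have hAsa : ContinuousLinearMap.adjoint A = A := hA.isSelfAdjoint
  -- pointwise adjoint relations
  have hSapp : ∀ u : H, A (S u) = ContinuousLinearMap.adjoint T (A u) := by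
    intro u
    have := congrArg (fun (B : H →L[ℂ] H) => B u) hS
    simpa using this
  have hS' : (ContinuousLinearMap.adjoint S) ∘L A = A ∘L T := by
    have h2 := congrArg ContinuousLinearMap.adjoint hS
    rw [ContinuousLinearMap.adjoint_comp, ContinuousLinearMap.adjoint_comp,
      ContinuousLinearMap.adjoint_adjoint, hAsa] at h2
    exact h2
  have hTapp : ∀ u : H, A (T u) = ContinuousLinearMap.adjoint S (A u) := by
    intro u
    have := congrArg (fun (B : H →L[ℂ] H) => B u) hS'
    simpa using this.symm
  have hRapp : ∀ u : H, A (R u) =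
      ContinuousLinearMap.adjoint S (A (S u)) + ContinuousLinearMap.adjoint T (A (T u)) := by
    intro u
    have e : R u = T (S u) + S (T u) := rfl
    rw [e, map_add, hTapp (S u), hSapp (T u)]
  -- A-selfadjointness of R as composition equation
  have hW : A ∘L R = (ContinuousLinearMap.adjoint R) ∘L A := by
    refine ContinuousLinearMap.ext fun u => ?_
    have hadjR : ContinuousLinearMap.adjoint R =
        (ContinuousLinearMap.adjoint S) ∘L (ContinuousLinearMap.adjoint T) +
        (ContinuousLinearMap.adjoint T) ∘L (ContinuousLinearMap.adjoint S) := by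
      rw [hR, map_add, ContinuousLinearMap.adjoint_comp, ContinuousLinearMap.adjoint_comp]
    simp only [ContinuousLinearMap.comp_apply, hadjR, ContinuousLinearMap.add_apply]
    rw [hRapp u, hSapp u, hTapp u]
  -- the sup set for opNormA is bounded above
  set Sset := {r : ℝ | ∃ x ∈ closure (Set.range fun v => A v), x ≠ 0 ∧
      r = normA A (R x) / normA A x} with hSset
  have hbdd : BddAbove Sset := by
    refine ⟨‖R‖, ?_⟩
    rintro r ⟨x, hx, hx0, rfl⟩
    rcases (normA_nonneg A x).eq_or_lt with h0 | h0
    · have hRx : normA A (R x) = 0 := by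
        have h1 := normA_map_le hA hW x
        rw [← h0, mul_zero] at h1
        exact le_antisymm h1 (normA_nonneg _ _)
      rw [hRx, zero_div]
      exact norm_nonneg R
    · rw [div_le_iff₀ h0]
      exact normA_map_le hA hW x
  have hN0 : (0:ℝ) ≤ opNormA A R := by
    apply Real.sSup_nonneg
    rintro r ⟨x, hx, hx0, rfl⟩
    exact div_nonneg (normA_nonneg _ _) (normA_nonneg _ _)
  set N := opNormA A R with hN
  -- key: for unit vectors, ‖Tx‖² + ‖Sx‖² ≤ N
  have hunit : ∀ x : H, normA A x = 1 →
      normA A (T x) ^ 2 + normA A (S x) ^ 2 ≤ N := by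
    intro x hx1
    set U := (LinearMap.range (A : H →ₗ[ℂ] H)).topologicalClosure with hU
    set p : H := (U.orthogonalProjectionOnto x : H) with hp
    set k : H := x - p with hk
    have hkmem : k ∈ Uᗮ := Submodule.sub_starProjection_mem_orthogonal (K := U) x
    have hak : ∀ v : H, ⟪A v, k⟫_ℂ = 0 := by
      intro v
      have hAvU : A v ∈ U := by
        apply Submodule.le_topologicalClosure
        exact LinearMap.mem_range_self _ v
      exact (Submodule.mem_orthogonal U k).mp hkmem (A v) hAvU
    have hAk : A k = 0 := by
      have h1 : ∀ v : H, ⟪v, A k⟫_ℂ = 0 := fun v => by rw [← hsym hA]; exact hak v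
      have := h1 (A k)
      exact inner_self_eq_zero.mp this
    have hxpk : x = p + k := by rw [hk]; abel
    have hsipk : ∀ u : H, ⟪k, A u⟫_ℂ = 0 := by
      intro u
      rw [← hsym hA]
      have : A k = 0 := hAk
      rw [this, inner_zero_left]
    have hAx : A x = A p := by
      have : A x - A p = A k := by rw [← map_sub]
      rw [hAk] at this
      linear_combination (norm := module) this
    have hspp : sip A p p = sip A x x := by
      rw [sip, sip, hAx, hxpk, inner_add_left, hsipk p, add_zero]
    have hp1 : normA A p = 1 := by
      rw [normA, hspp, ← normA, hx1]
    have hp0 : p ≠ 0 := by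
      intro h
      rw [h, normA_zero] at hp1
      norm_num at hp1
    have hpU : p ∈ closure (Set.range fun v => A v) := by
      have hmem : p ∈ U := (U.orthogonalProjectionOnto x).2
      have e : (U : Set H) = closure (Set.range fun v => A v) := by
        rw [hU, Submodule.topologicalClosure_coe]
        congr 1
      exact e ▸ hmem
    have hmemS : normA A (R p) ∈ Sset := by
      refine ⟨p, hpU, hp0, ?_⟩
      rw [hp1, div_one]
    have hRpN : normA A (R p) ≤ N := le_csSup hbdd hmemS
    -- A (R k) = 0
    have hATk : A (T k) = 0 := by rw [hTapp k, hAk, map_zero]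
    have hASk : A (S k) = 0 := by rw [hSapp k, hAk, map_zero]
    have hARk : A (R k) = 0 := by
      rw [hRapp k, hASk, hATk, map_zero, map_zero, add_zero]
    have hARx : A (R x) = A (R p) := by
      have : A (R x) - A (R p) = A (R k) := by
        rw [← map_sub, ← map_sub, hk]
      rw [hARk] at this
      linear_combination (norm := module) this
    have heq1 : sip A (R x) x = sip A (T x) (T x) + sip A (S x) (S x) := by
      rw [sip, sip, sip, hRapp x, inner_add_right,
        ContinuousLinearMap.adjoint_inner_right, ContinuousLinearMap.adjoint_inner_right,
        add_comm]
    have heq2 : sip A (R x) x = sip A (R p) p := by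
      rw [sip, sip, hARx, hxpk, inner_add_left, hsipk (R p), add_zero]
    have hfin : normA A (T x) ^ 2 + normA A (S x) ^ 2 = (sip A (R p) p).re := by
      rw [normA_sq hA, normA_sq hA, ← Complex.add_re, ← heq1, heq2]
    rw [hfin]
    calc (sip A (R p) p).re ≤ ‖sip A (R p) p‖ := Complex.re_le_norm _
      _ ≤ normA A (R p) * normA A p := abs_sip_le hA _ _
      _ = normA A (R p) := by rw [hp1, mul_one]
      _ ≤ N := hRpN
  -- element bound
  set M := t * Real.sqrt (N / 2) + Real.sqrt (1 - t ^ 2) * Real.sqrt N with hM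
  have hM0 : 0 ≤ M := by positivity
  have helem : ∀ x y : H, normA A x = 1 → normA A y = 1 → sip A x y = q →
      ‖sip A (T x) y‖ ≤ M := by
    intro x y hx1 hy1 hxy
    have hbc := hunit x hx1
    have hb0 : 0 ≤ normA A (T x) := normA_nonneg _ _
    have hc0 : 0 ≤ normA A (S x) := normA_nonneg _ _
    have ha1 : ‖sip A (T x) x‖ ≤ normA A (T x) := by
      have := abs_sip_le hA (T x) x
      rwa [hx1, mul_one] at this
    have hTxSx : sip A (T x) x = sip A x (S x) := by
      rw [sip, sip, hTapp x, ContinuousLinearMap.adjoint_inner_right]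
    have ha2 : ‖sip A (T x) x‖ ≤ normA A (S x) := by
      rw [hTxSx]
      have := abs_sip_le hA x (S x)
      rwa [hx1, one_mul] at this
    have ha : ‖sip A (T x) x‖ ≤ Real.sqrt (N / 2) := by
      apply Real.le_sqrt_of_sq_le
      nlinarith [norm_nonneg (sip A (T x) x),
        sq_nonneg (normA A (T x) - normA A (S x))]
    have hbN : normA A (T x) ≤ Real.sqrt N := by
      apply Real.le_sqrt_of_sq_le
      nlinarith [sq_nonneg (normA A (S x))]
    -- decomposition of y
    set z : H := y - (starRingEnd ℂ q) • x with hzdef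
    have hsplit : sip A (T x) z = sip A (T x) y - q * sip A (T x) x := by
      rw [sip, sip, sip, hzdef, inner_sub_left, inner_smul_left]
      rw [Complex.conj_conj]
    have hyx : sip A y x = starRingEnd ℂ q := by
      rw [← sip_conj hA x y, hxy]
    have hsxx : sip A x x = 1 := sip_self_eq_one hA hx1
    have hsyy : sip A y y = 1 := sip_self_eq_one hA hy1
    have hzz : sip A z z = 1 - ((t ^ 2 : ℝ) : ℂ) := by
      have e1 : ⟪y, A y⟫_ℂ = 1 := hsyy
      have e2 : ⟪y, A x⟫_ℂ = q := hxy
      have e3 : ⟪x, A y⟫_ℂ = starRingEnd ℂ q := hyx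
      have e4 : ⟪x, A x⟫_ℂ = 1 := hsxx
      have e5 : q * starRingEnd ℂ q = ((t ^ 2 : ℝ) : ℂ) := by
        rw [Complex.mul_conj, Complex.normSq_eq_norm_sq, ← ht]
      rw [sip, hzdef, map_sub, map_smul]
      simp only [inner_sub_left, inner_sub_right, inner_smul_left, inner_smul_right]
      rw [e1, e2, e3, e4, Complex.conj_conj]
      rw [← e5]
      ring
    have hnz : normA A z = Real.sqrt (1 - t ^ 2) := by
      have e : ((1 : ℂ) - ((t ^ 2 : ℝ) : ℂ)).re = 1 - t ^ 2 := by
        rw [Complex.sub_re, Complex.one_re, Complex.ofReal_re]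
      rw [normA, hzz, e]
    calc ‖sip A (T x) y‖
        = ‖q * sip A (T x) x + sip A (T x) z‖ := by
          congr 1
          rw [hsplit]
          ring
      _ ≤ ‖q * sip A (T x) x‖ + ‖sip A (T x) z‖ :=
          norm_add_le _ _
      _ = t * ‖sip A (T x) x‖ + ‖sip A (T x) z‖ := by
          rw [norm_mul, ht]
      _ ≤ t * Real.sqrt (N / 2) + normA A (T x) * normA A z :=
          add_le_add (mul_le_mul_of_nonneg_left ha ht0) (abs_sip_le hA _ _)
      _ = t * Real.sqrt (N / 2) + Real.sqrt (1 - t ^ 2) * normA A (T x) := by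
          rw [hnz]; ring
      _ ≤ t * Real.sqrt (N / 2) + Real.sqrt (1 - t ^ 2) * Real.sqrt N := by
          gcongr
      _ = M := hM.symm
  -- conclude
  have hw0 : 0 ≤ wqA A T q := by
    apply Real.sSup_nonneg
    rintro r ⟨x, y, hx1, hy1, hxy, rfl⟩
    exact norm_nonneg _
  have hwle : wqA A T q ≤ M := by
    apply Real.sSup_le ?_ hM0
    rintro r ⟨x, y, hx1, hy1, hxy, rfl⟩
    exact helem x y hx1 hy1 hxy
  have hsq : wqA A T q ^ 2 ≤ M ^ 2 := by
    apply pow_le_pow_left₀ hw0 hwle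
  refine hsq.trans ?_
  have hu2 : Real.sqrt (N / 2) ^ 2 = N / 2 := Real.sq_sqrt (by positivity)
  have hw2 : Real.sqrt N ^ 2 = N := Real.sq_sqrt hN0
  have hs2 : Real.sqrt (1 - t ^ 2) ^ 2 = 1 - t ^ 2 := Real.sq_sqrt ht1
  have huw : Real.sqrt (N / 2) * Real.sqrt N ≤ N := by
    have h1 : Real.sqrt (N / 2) ≤ Real.sqrt N := Real.sqrt_le_sqrt (by linarith)
    calc Real.sqrt (N / 2) * Real.sqrt N ≤ Real.sqrt N * Real.sqrt N :=
          mul_le_mul_of_nonneg_right h1 (Real.sqrt_nonneg _)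
      _ = N := Real.mul_self_sqrt hN0
  rw [hM]
  nlinarith [mul_nonneg (mul_nonneg ht0 (Real.sqrt_nonneg (1 - t ^ 2))) (sub_nonneg.mpr huw),
    Real.sqrt_nonneg (N / 2), Real.sqrt_nonneg N, Real.sqrt_nonneg (1 - t ^ 2), hN0, ht0]
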